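/- Let 𝒢 be a class of functions 𝒳 → ℝ closed under linear combinations, and suppose the structural mechanism is g(x, ŷ) = g₁(x) + α·ŷ with g₁ ∈ 𝒢 and α > 0. Let f_θ : 𝒳 → ℝ be deterministic and overparameterized with respect to 𝒢 (no g' ∈ 𝒢 and c ∈ ℝ satisfy f_θ(x) = c·g'(x) for all x ∈ 𝒳). Then M_Y(x, ŷ) = g₁(x) + α·ŷ is identifiable from the observational data: any function h of the form h(x, ŷ) = g₁'(x) + α'·ŷ with g₁' ∈ 𝒢 and α' ∈ ℝ satisfying h(x, f_θ(x)) = g(x, f_θ(x)) for all x ∈ 𝒳 must have α' = α and g₁'(x) = g₁(x) for all x ∈ 𝒳. -/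
import Mathlib


/-- Proposition 4 (Identifiability from overparameterization): for the separable
mechanism `g(x,yh) = g₁(x) + α·yh` with `g₁ ∈ 𝒢`, `α > 0`, and `fθ`
overparameterized with respect to the linearly closed class `𝒢`, any hypothesis
`h(x,yh) = g₁'(x) + α'·yh` with `g₁' ∈ 𝒢` agreeing with `g` on the observed
support `yh = fθ(x)` must satisfy `α' = α` and `g₁' = g₁` pointwise. -/
theorem stmt_5 {𝒳 : Type*} (𝒢 : Set (𝒳 → ℝ))
    (hclosed : ∀ g₁ g₂ : 𝒳 → ℝ, g₁ ∈ 𝒢 → g₂ ∈ 𝒢 → ∀ a₁ a₂ : ℝ,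
      (fun x => a₁ * g₁ x + a₂ * g₂ x) ∈ 𝒢)
    (fθ : 𝒳 → ℝ)
    (hover : ¬ ∃ g' ∈ 𝒢, ∃ c : ℝ, ∀ x : 𝒳, fθ x = c * g' x)
    (g₁ : 𝒳 → ℝ) (hg₁ : g₁ ∈ 𝒢) (α : ℝ) (hα : 0 < α)
    (g₁' : 𝒳 → ℝ) (hg₁' : g₁' ∈ 𝒢) (α' : ℝ)
    (hagree : ∀ x : 𝒳, g₁' x + α' * fθ x = g₁ x + α * fθ x) :
    α' = α ∧ ∀ x : 𝒳, g₁' x = g₁ x := by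
  have hαα : α' = α := by
    by_contra hne
    apply hover
    refine ⟨fun x => 1 * g₁' x + (-1) * g₁ x, hclosed _ _ hg₁' hg₁ 1 (-1),
      (α - α')⁻¹, fun x => ?_⟩
    have h := hagree x
    have hsub : α - α' ≠ 0 := sub_ne_zero.mpr fun e => hne e.symm
    rw [eq_inv_mul_iff_mul_eq₀ hsub]
    show (α - α') * fθ x = 1 * g₁' x + -1 * g₁ x
    linarith
  refine ⟨hαα, fun x => ?_⟩
  have h := hagree x
  rw [hαα] at h
  linarith
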